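/- For integers t, k, v, m with t ≥ 2, v ≥ 2, k ≥ 2t and 2 ≤ m ≤ v^t, and any natural number N satisfying N ≥ (1 + ln(t·C(k,t−1)·C(v^t, m−1))) / ln(v^t/(m−1)), there exists a partial m-covering array PCA(N; t, k, v, m); i.e., there exists an array A : Fin N → Fin k → Fin v such that for every t-subset C of columns, the rows of A restricted to C take at least m distinct values in (Fin v)^C. -/

import Mathlib

open Finset
set_option linter.unusedSectionVars false
set_option maxHeartbeats 1000000

/-- The number of distinct `t`-tuples `x : C → Fin v` covered by the rows of the array `A`
restricted to the column set `C`. -/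
noncomputable def coverCount {N k v : ℕ} (A : Fin N → Fin k → Fin v) (C : Finset (Fin k)) : ℕ :=
  Nat.card {x : C → Fin v // ∃ i : Fin N, (fun j : C => A i j) = x}


set_option linter.unusedSectionVars false
section LLLsec
variable {Ω : Type*} [Fintype Ω] [DecidableEq Ω] [Nonempty Ω]

noncomputable def pr (E : Finset Ω) : ℝ := (E.card : ℝ) / (Fintype.card Ω : ℝ)

lemma card_pos' : (0:ℝ) < (Fintype.card Ω : ℝ) := by
  exact_mod_cast Fintype.card_pos

lemma pr_nonneg (E : Finset Ω) : 0 ≤ pr E := by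
  unfold pr; positivity

lemma pr_univ : pr (univ : Finset Ω) = 1 := by
  unfold pr
  rw [Finset.card_univ, div_self (ne_of_gt card_pos')]

lemma pr_mono' {E F : Finset Ω} (h : E ⊆ F) : pr E ≤ pr F := by
  unfold pr
  gcongr

lemma pr_inter_compl (T E : Finset Ω) : pr (T ∩ Eᶜ) = pr T - pr (E ∩ T) := by
  unfold pr
  rw [div_sub_div_same]
  congr 1
  have h1 : T ∩ Eᶜ = T \ E := by ext a; simp [and_comm]
  have h2 : (T \ E).card + (T ∩ E).card = T.card := Finset.card_sdiff_add_card_inter T E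
  rw [h1, Finset.inter_comm E T]
  have := h2
  push_cast [← this]
  ring

theorem lll {ι : Type*} [DecidableEq ι] [Fintype ι]
    (A : ι → Finset Ω) (Γ : ι → Finset ι) (hmem : ∀ i, i ∈ Γ i)
    (x : ℝ) (hx0 : 0 < x) (hx1 : x < 1)
    (hp : ∀ i, pr (A i) ≤ x * (1 - x) ^ ((Γ i).card - 1))
    (hind : ∀ i, ∀ J : Finset ι, (∀ j ∈ J, j ∉ Γ i) →
      pr (A i ∩ J.inf fun j => (A j)ᶜ) = pr (A i) * pr (J.inf fun j => (A j)ᶜ)) :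
    ∃ ω : Ω, ∀ i, ω ∉ A i := by
  have hx1' : 0 < 1 - x := by linarith
  have step : ∀ (s : Finset ι) (a : ι),
      pr (s.inf fun j => (A j)ᶜ) - pr (A a ∩ s.inf fun j => (A j)ᶜ)
        = pr ((insert a s).inf fun j => (A j)ᶜ) := by
    intro s a
    rw [Finset.inf_insert]
    have : (A a)ᶜ ⊓ (s.inf fun j => (A j)ᶜ) = (s.inf fun j => (A j)ᶜ) ∩ (A a)ᶜ := by
      rw [inf_comm]; rfl
    rw [this, pr_inter_compl]
  have key : ∀ n (J : Finset ι), J.card = n →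
      0 < pr (J.inf fun j => (A j)ᶜ) ∧
      ∀ i, i ∉ J → pr (A i ∩ J.inf fun j => (A j)ᶜ) ≤ x * pr (J.inf fun j => (A j)ᶜ) := by
    intro n
    induction n using Nat.strong_induction_on with
    | _ n ih =>
    intro J hJ
    have pos : 0 < pr (J.inf fun j => (A j)ᶜ) := by
      rcases Nat.eq_zero_or_pos n with h0 | hpos
      · subst h0
        rw [Finset.card_eq_zero] at hJ
        subst hJ
        simp only [Finset.inf_empty]
        rw [show (⊤ : Finset Ω) = univ from rfl, pr_univ]
        norm_num
      · obtain ⟨a, ha⟩ := Finset.card_pos.mp (hJ ▸ hpos)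
        obtain ⟨J', haJ', rfl⟩ : ∃ J', a ∉ J' ∧ insert a J' = J :=
          ⟨J.erase a, Finset.notMem_erase a J, Finset.insert_erase ha⟩
        have hcard : J'.card = n - 1 := by
          rw [Finset.card_insert_of_notMem haJ'] at hJ; omega
        have hlt : n - 1 < n := by omega
        obtain ⟨pos', bnd'⟩ := ih (n-1) hlt J' hcard
        rw [← step]
        have := bnd' a haJ'
        nlinarith [pos']
    refine ⟨pos, ?_⟩
    intro i hi
    classical
    set J1 := J.filter (· ∈ Γ i) with hJ1def
    set J2 := J.filter (· ∉ Γ i) with hJ2def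
    have hJsplit : J1 ∪ J2 = J := Finset.filter_union_filter_not_eq _ J
    have hJ2sub : J2 ⊆ J := Finset.filter_subset _ _
    have peel : ∀ T : Finset ι, T ⊆ J1 →
        (1 - x) ^ T.card * pr (J2.inf fun j => (A j)ᶜ) ≤ pr ((T ∪ J2).inf fun j => (A j)ᶜ) := by
      intro T
      induction T using Finset.induction_on with
      | empty => intro _; simp
      | @insert a T haT ihT =>
        intro hins
        have hTsub : T ⊆ J1 := (Finset.insert_subset_iff.mp hins).2
        have haJ1 : a ∈ J1 := (Finset.insert_subset_iff.mp hins).1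
        have haJ : a ∈ J := Finset.mem_of_mem_filter a haJ1
        have haGi : a ∈ Γ i := (Finset.mem_filter.mp haJ1).2
        have haJ2 : a ∉ J2 := fun h => (Finset.mem_filter.mp h).2 haGi
        have haTJ2 : a ∉ T ∪ J2 := by
          simp only [Finset.mem_union]; tauto
        have hsub : T ∪ J2 ⊆ J := Finset.union_subset (hTsub.trans (Finset.filter_subset _ _)) hJ2sub
        have hsslt : (T ∪ J2).card < n := by
          rw [← hJ]
          apply Finset.card_lt_card
          rw [Finset.ssubset_iff_of_subset hsub]
          exact ⟨a, haJ, haTJ2⟩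
        obtain ⟨posT, bndT⟩ := ih _ hsslt (T ∪ J2) rfl
        have hstep := step (T ∪ J2) a
        have hrw : insert a (T ∪ J2) = insert a T ∪ J2 := by
          rw [Finset.insert_union]
        rw [hrw] at hstep
        have hb := bndT a haTJ2
        have := ihT hTsub
        rw [Finset.card_insert_of_notMem haT]
        calc (1-x) ^ (T.card + 1) * pr (J2.inf fun j => (A j)ᶜ)
            = (1-x) * ((1-x)^T.card * pr (J2.inf fun j => (A j)ᶜ)) := by ring
          _ ≤ (1-x) * pr ((T ∪ J2).inf fun j => (A j)ᶜ) := by nlinarith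
          _ ≤ pr ((insert a T ∪ J2).inf fun j => (A j)ᶜ) := by nlinarith
    have hJ2prop : ∀ j ∈ J2, j ∉ Γ i := fun j hj => (Finset.mem_filter.mp hj).2
    have hNJsub : (J.inf fun j => (A j)ᶜ) ⊆ (J2.inf fun j => (A j)ᶜ) :=
      Finset.inf_mono (f := fun j => (A j)ᶜ) hJ2sub
    have h1 : pr (A i ∩ J.inf fun j => (A j)ᶜ) ≤ pr (A i) * pr (J2.inf fun j => (A j)ᶜ) := by
      rw [← hind i J2 hJ2prop]
      exact pr_mono' (Finset.inter_subset_inter (le_refl _) hNJsub)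
    have hJ1card : J1.card ≤ (Γ i).card - 1 := by
      have hsub : J1 ⊆ (Γ i).erase i := by
        intro j hj
        rw [Finset.mem_erase]
        exact ⟨fun h => hi (h ▸ Finset.mem_of_mem_filter j hj), (Finset.mem_filter.mp hj).2⟩
      calc J1.card ≤ ((Γ i).erase i).card := Finset.card_le_card hsub
        _ = (Γ i).card - 1 := Finset.card_erase_of_mem (hmem i)
    have hpow : (1-x) ^ ((Γ i).card - 1) ≤ (1-x) ^ J1.card := by
      apply pow_le_pow_of_le_one (le_of_lt hx1') (by linarith) hJ1card
    have hposJ2 : 0 < pr (J2.inf fun j => (A j)ᶜ) := by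
      rcases Nat.lt_or_ge J2.card n with hlt | hge
      · exact (ih _ hlt J2 rfl).1
      · have : J2 = J := Finset.eq_of_subset_of_card_le hJ2sub (hJ ▸ hge)
        rw [this]; exact pos
    have hpeel := peel J1 (le_refl _)
    rw [hJsplit] at hpeel
    calc pr (A i ∩ J.inf fun j => (A j)ᶜ)
        ≤ pr (A i) * pr (J2.inf fun j => (A j)ᶜ) := h1
      _ ≤ (x * (1-x)^((Γ i).card - 1)) * pr (J2.inf fun j => (A j)ᶜ) := by
          apply mul_le_mul_of_nonneg_right (hp i) (le_of_lt hposJ2)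
      _ ≤ x * ((1-x)^J1.card * pr (J2.inf fun j => (A j)ᶜ)) := by
          rw [mul_assoc]
          apply mul_le_mul_of_nonneg_left _ (le_of_lt hx0)
          exact mul_le_mul_of_nonneg_right hpow (le_of_lt hposJ2)
      _ ≤ x * pr (J.inf fun j => (A j)ᶜ) := mul_le_mul_of_nonneg_left hpeel (le_of_lt hx0)
  obtain ⟨pos, -⟩ := key (Fintype.card ι) univ (by simp)
  have : ((univ : Finset ι).inf fun j => (A j)ᶜ).Nonempty := by
    rw [← Finset.card_pos]
    by_contra h
    push_neg at h
    interval_cases h' : ((univ : Finset ι).inf fun j => (A j)ᶜ).card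
    · unfold pr at pos; rw [h'] at pos; simp at pos
  obtain ⟨ω, hω⟩ := this
  refine ⟨ω, fun i => ?_⟩
  have : ((univ : Finset ι).inf fun j => (A j)ᶜ) ⊆ (A i)ᶜ :=
    Finset.inf_le (Finset.mem_univ i)
  have := this hω
  simpa using this

lemma pr_of_indep {E F : Finset Ω}
    (h : (E ∩ F).card * Fintype.card Ω = E.card * F.card) :
    pr (E ∩ F) = pr E * pr F := by
  have hc : (0:ℝ) < (Fintype.card Ω : ℝ) := card_pos'
  have h' : ((E ∩ F).card : ℝ) * (Fintype.card Ω : ℝ) = (E.card : ℝ) * (F.card : ℝ) := by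
    exact_mod_cast h
  unfold pr
  rw [div_mul_div_comm, div_eq_div_iff (by positivity) (by positivity)]
  nlinarith [h']

end LLLsec

section Cyl
variable {ρ κ V : Type*} [Fintype ρ] [Fintype κ] [Fintype V]
  [DecidableEq ρ] [DecidableEq κ] [DecidableEq V]

/-- `E` only depends on the columns in `D`. -/
def IsCyl (D : Finset κ) (E : Finset (ρ → κ → V)) : Prop :=
  ∀ a b : ρ → κ → V, (∀ i j, j ∈ D → a i j = b i j) → (a ∈ E → b ∈ E)

lemma IsCyl.compl {D : Finset κ} {E : Finset (ρ → κ → V)} (h : IsCyl D E) :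
    IsCyl D Eᶜ := by
  intro a b hab ha
  rw [Finset.mem_compl] at ha ⊢
  intro hb
  exact ha (h b a (fun i j hj => (hab i j hj).symm) hb)

lemma IsCyl.univ (D : Finset κ) : IsCyl D (univ : Finset (ρ → κ → V)) :=
  fun _ b _ _ => Finset.mem_univ b

lemma IsCyl.inter {D : Finset κ} {E F : Finset (ρ → κ → V)}
    (hE : IsCyl D E) (hF : IsCyl D F) : IsCyl D (E ∩ F) := by
  intro a b hab ha
  rw [Finset.mem_inter] at ha ⊢
  exact ⟨hE a b hab ha.1, hF a b hab ha.2⟩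

lemma IsCyl.inf {ι : Type*} [DecidableEq ι] {D : Finset κ} {f : ι → Finset (ρ → κ → V)}
    (J : Finset ι) (h : ∀ j ∈ J, IsCyl D (f j)) : IsCyl D (J.inf f) := by
  induction J using Finset.induction_on with
  | empty => simpa using IsCyl.univ D
  | @insert a T haT ih =>
    intro x y hxy hx
    rw [Finset.inf_insert] at hx ⊢
    have hx' : x ∈ f a ∩ T.inf f := hx
    have := (IsCyl.inter (h a (Finset.mem_insert_self a T))
      (ih (fun j hj => h j (Finset.mem_insert_of_mem hj)))) x y hxy hx'
    exact this

lemma IsCyl.mono {D D' : Finset κ} {E : Finset (ρ → κ → V)}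
    (hDD : D ⊆ D') (h : IsCyl D E) : IsCyl D' E :=
  fun a b hab ha => h a b (fun i j hj => hab i j (hDD hj)) ha

lemma cyl_card_mul {D : Finset κ} {E F : Finset (ρ → κ → V)}
    (hE : IsCyl D E) (hF : IsCyl Dᶜ F) :
    (E ∩ F).card * Fintype.card (ρ → κ → V) = E.card * F.card := by
  classical
  set φ : (ρ → κ → V) → (ρ → κ → V) → (ρ → κ → V) :=
    fun a b i j => if j ∈ D then a i j else b i j with hφ
  have hφD : ∀ a b, ∀ i j, j ∈ D → a i j = φ a b i j := by
    intro a b i j hj; simp [hφ, hj]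
  have hφDc : ∀ a b, ∀ i j, j ∈ Dᶜ → b i j = φ a b i j := by
    intro a b i j hj
    rw [Finset.mem_compl] at hj
    simp [hφ, hj]
  have hmemE : ∀ a b, a ∈ E ↔ φ a b ∈ E := by
    intro a b
    constructor
    · exact hE a (φ a b) (hφD a b)
    · exact hE (φ a b) a (fun i j hj => (hφD a b i j hj).symm)
  have hmemF : ∀ a b, b ∈ F ↔ φ a b ∈ F := by
    intro a b
    constructor
    · exact hF b (φ a b) (hφDc a b)
    · exact hF (φ a b) b (fun i j hj => (hφDc a b i j hj).symm)
  have hinv : ∀ a b : ρ → κ → V, φ (φ a b) (φ b a) = a ∧ φ (φ b a) (φ a b) = b := by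
    intro a b
    constructor <;> · funext i j; by_cases hj : j ∈ D <;> simp [hφ, hj]
  have hcard : (E ×ˢ F).card = ((E ∩ F) ×ˢ (univ : Finset (ρ → κ → V))).card := by
    apply Finset.card_nbij' (fun p => (φ p.1 p.2, φ p.2 p.1)) (fun p => (φ p.1 p.2, φ p.2 p.1))
    · intro p hp
      rw [Finset.mem_coe, Finset.mem_product] at hp
      rw [Finset.mem_coe, Finset.mem_product, Finset.mem_inter]
      exact ⟨⟨(hmemE p.1 p.2).mp hp.1, (hmemF p.1 p.2).mp hp.2⟩, Finset.mem_univ _⟩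
    · intro q hq
      rw [Finset.mem_coe, Finset.mem_product, Finset.mem_inter] at hq
      rw [Finset.mem_coe, Finset.mem_product]
      exact ⟨(hmemE q.1 q.2).mp hq.1.1, (hmemF q.2 q.1).mp hq.1.2⟩
    · intro p _
      exact Prod.ext (hinv p.1 p.2).1 (hinv p.1 p.2).2
    · intro q _
      exact Prod.ext (hinv q.1 q.2).1 (hinv q.1 q.2).2
  have h1 := hcard
  rw [Finset.card_product, Finset.card_product, Finset.card_univ] at h1
  rw [mul_comm ((E ∩ F).card) _] at h1
  rw [h1, mul_comm]

end Cyl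

section App
variable {k v : ℕ} [NeZero v]

/-- Replace values outside `C` by `default`. -/
def mask (C : Finset (Fin k)) (f : Fin k → Fin v) : Fin k → Fin v :=
  fun j => if j ∈ C then f j else default

lemma mask_mask (C : Finset (Fin k)) (f : Fin k → Fin v) : mask C (mask C f) = mask C f := by
  funext j; unfold mask; by_cases h : j ∈ C <;> simp [h]

lemma mask_congr {C : Finset (Fin k)} {f g : Fin k → Fin v}
    (h : ∀ j ∈ C, f j = g j) : mask C f = mask C g := by
  funext j; unfold mask; by_cases hj : j ∈ C <;> simp [hj, h]

/-- The set of functions supported on `C`. -/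
def maskSet (C : Finset (Fin k)) : Finset (Fin k → Fin v) :=
  univ.filter (fun f => mask C f = f)

lemma mem_maskSet {C : Finset (Fin k)} {f : Fin k → Fin v} :
    f ∈ maskSet C ↔ mask C f = f := by simp [maskSet]

lemma card_maskSet (C : Finset (Fin k)) : (maskSet (v := v) C).card = v ^ C.card := by
  classical
  have : (maskSet (v := v) C).card = (univ : Finset ((j : C) → Fin v)).card := by
    apply Finset.card_nbij' (fun f => fun j : C => f j.1)
      (fun g => fun j => if h : j ∈ C then g ⟨j, h⟩ else default)
    · intro f _; exact Finset.mem_univ _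
    · intro g _
      rw [Finset.mem_coe, mem_maskSet]
      funext j; unfold mask; by_cases h : j ∈ C <;> simp [h]
    · intro f hf
      rw [Finset.mem_coe, mem_maskSet] at hf
      funext j
      by_cases h : j ∈ C
      · simp [h]
      · simp only [h, dif_neg, not_false_iff]
        conv_rhs => rw [← hf]
        unfold mask; simp [h]
    · intro g _
      funext j
      simp [j.2]
  rw [this, Finset.card_univ, Fintype.card_fun, Fintype.card_fin, Fintype.card_coe]

/-- Index type for bad events: a `t`-set of columns together with an
`(m-1)`-set of tuples supported on those columns. -/
def PIdx (t m k v : ℕ) [NeZero v] :=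
  {p : Finset (Fin k) × Finset (Fin k → Fin v) //
    p.1.card = t ∧ p.2.card = m - 1 ∧ p.2 ⊆ maskSet p.1}

instance (t m : ℕ) : Fintype (PIdx t m k v) := by unfold PIdx; infer_instance
instance (t m : ℕ) : DecidableEq (PIdx t m k v) := by unfold PIdx; infer_instance

/-- The bad event: every row, masked to the columns, lies in the small set `S`. -/
def BadEv {t m : ℕ} (N : ℕ) (q : PIdx t m k v) : Finset (Fin N → Fin k → Fin v) :=
  univ.filter (fun A => ∀ i, mask q.1.1 (A i) ∈ q.1.2)

lemma badEv_cyl {t m : ℕ} (N : ℕ) (q : PIdx t m k v) :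
    IsCyl q.1.1 (BadEv N q) := by
  intro a b hab ha
  simp only [BadEv, Finset.mem_filter, Finset.mem_univ, true_and] at ha ⊢
  intro i
  have : mask q.1.1 (b i) = mask q.1.1 (a i) :=
    mask_congr (fun j hj => (hab i j hj).symm)
  rw [this]; exact ha i

lemma card_badEv {t m : ℕ} (N : ℕ) (q : PIdx t m k v) :
    (BadEv N q).card = ((m - 1) * v ^ (k - t)) ^ N := by
  classical
  obtain ⟨⟨C, S⟩, hC, hS, hSsub⟩ := q
  set R : Finset (Fin k → Fin v) := univ.filter (fun f => mask C f ∈ S) with hR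
  have hBad : BadEv N ⟨(C, S), hC, hS, hSsub⟩ = Fintype.piFinset (fun _ : Fin N => R) := by
    ext A
    simp [BadEv, hR, Fintype.mem_piFinset]
  have hRcard : R.card = (m - 1) * v ^ (k - t) := by
    have key : R.card = (S ×ˢ (univ : Finset ((j : ((Cᶜ : Finset (Fin k)) : Finset (Fin k))) → Fin v))).card := by
      apply Finset.card_nbij' (fun f => (mask C f, fun j => f j.1))
        (fun p => fun j => if h : j ∈ C then p.1 j else p.2 ⟨j, by simp [h]⟩)
      · intro f hf
        rw [hR, Finset.mem_coe, Finset.mem_filter] at hf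
        rw [Finset.mem_coe, Finset.mem_product]
        exact ⟨hf.2, Finset.mem_univ _⟩
      · intro p hp
        rw [Finset.mem_coe, Finset.mem_product] at hp
        have hp1 : mask C p.1 = p.1 := mem_maskSet.mp (hSsub hp.1)
        rw [hR, Finset.mem_coe, Finset.mem_filter]
        refine ⟨Finset.mem_univ _, ?_⟩
        have : mask C (fun j => if h : j ∈ C then p.1 j else p.2 ⟨j, by simp [h]⟩) = p.1 := by
          conv_rhs => rw [← hp1]
          funext j; unfold mask; by_cases h : j ∈ C <;> simp [h]
        rw [this]; exact hp.1
      · intro f hf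
        funext j
        by_cases h : j ∈ C
        · simp [h, mask]
        · simp [h]
      · intro p hp
        rw [Finset.mem_coe, Finset.mem_product] at hp
        have hp1 : mask C p.1 = p.1 := mem_maskSet.mp (hSsub hp.1)
        refine Prod.ext ?_ ?_
        · simp only
          conv_rhs => rw [← hp1]
          funext j; unfold mask; by_cases h : j ∈ C <;> simp [h]
        · simp only
          funext j
          have hj : ¬ (j.1 ∈ C) := by
            have := j.2; simp only [Finset.mem_compl] at this; exact this
          simp [hj]
    rw [key, Finset.card_product, hS, Finset.card_univ, Fintype.card_fun,
      Fintype.card_fin, Fintype.card_coe, Finset.card_compl, Fintype.card_fin, hC]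
  rw [hBad, Fintype.card_piFinset]
  simp [hRcard]

/-- Neighbourhood: indices whose column set meets that of `q`. -/
def Gam {t m : ℕ} (q : PIdx t m k v) : Finset (PIdx t m k v) :=
  univ.filter (fun q' => (q'.1.1 ∩ q.1.1).Nonempty)

lemma self_mem_Gam {t m : ℕ} (ht : 1 ≤ t) (q : PIdx t m k v) : q ∈ Gam q := by
  rw [Gam, Finset.mem_filter]
  refine ⟨Finset.mem_univ _, ?_⟩
  rw [Finset.inter_self]
  rw [← Finset.card_pos, q.2.1]
  omega

lemma card_Gam {t m : ℕ} (hk0 : 0 < k) (q : PIdx t m k v) :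
    (Gam q).card ≤ (t * k.choose (t-1)) * (v^t).choose (m-1) := by
  classical
  haveI : NeZero k := ⟨by omega⟩
  set C := q.1.1 with hCdef
  set TC : Finset (Finset (Fin k)) :=
    univ.filter (fun C' => C'.card = t ∧ (C' ∩ C).Nonempty) with hTC
  have maps : ∀ q' ∈ Gam q, q'.1.1 ∈ TC := by
    intro q' hq'
    rw [Gam, Finset.mem_filter] at hq'
    rw [hTC, Finset.mem_filter]
    exact ⟨Finset.mem_univ _, q'.2.1, hq'.2⟩
  have fib : ∀ C' ∈ TC, ((Gam q).filter (fun q' => q'.1.1 = C')).card ≤ (v^t).choose (m-1) := by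
    intro C' hC'
    rw [hTC, Finset.mem_filter] at hC'
    have : ((Gam q).filter (fun q' => q'.1.1 = C')).card
        ≤ (Finset.powersetCard (m-1) (maskSet (v := v) C')).card := by
      apply Finset.card_le_card_of_injOn (fun q' => q'.1.2)
      · intro q' hq'
        rw [Finset.mem_coe, Finset.mem_filter] at hq'
        rw [Finset.mem_coe, Finset.mem_powersetCard]
        refine ⟨?_, q'.2.2.1⟩
        rw [← hq'.2]
        exact q'.2.2.2
      · intro q1 h1 q2 h2 heq
        rw [Finset.mem_coe, Finset.mem_filter] at h1 h2
        apply Subtype.ext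
        apply Prod.ext
        · rw [h1.2, h2.2]
        · exact heq
    rw [Finset.card_powersetCard, card_maskSet, hC'.2.1] at this
    exact this
  have h1 : (Gam q).card ≤ (v^t).choose (m-1) * TC.card :=
    Finset.card_le_mul_card_image_of_maps_to maps _ fib
  have h2 : TC.card ≤ t * k.choose (t-1) := by
    have hinj : TC.card ≤ (C ×ˢ Finset.powersetCard (t-1) (univ : Finset (Fin k))).card := by
      apply Finset.card_le_card_of_injOn
        (fun C' => if h : (C' ∩ C).Nonempty
          then ((C' ∩ C).min' h, C'.erase ((C' ∩ C).min' h)) else (default, ∅))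
      · intro C' hC'
        rw [hTC, Finset.mem_coe, Finset.mem_filter] at hC'
        obtain ⟨-, hcard, hne⟩ := hC'
        beta_reduce
        rw [Finset.mem_coe, dif_pos hne, Finset.mem_product]
        have hmin := Finset.min'_mem _ hne
        rw [Finset.mem_inter] at hmin
        constructor
        · exact hmin.2
        · rw [Finset.mem_powersetCard]
          refine ⟨Finset.subset_univ _, ?_⟩
          rw [Finset.card_erase_of_mem hmin.1, hcard]
      · intro C1 h1' C2 h2' heq
        rw [Finset.mem_coe, hTC, Finset.mem_filter] at h1' h2'
        obtain ⟨-, -, hne1⟩ := h1'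
        obtain ⟨-, -, hne2⟩ := h2'
        simp only [dif_pos hne1, dif_pos hne2, Prod.mk.injEq] at heq
        have hm1 := Finset.min'_mem _ hne1
        have hm2 := Finset.min'_mem _ hne2
        rw [Finset.mem_inter] at hm1 hm2
        have e1 : insert ((C1 ∩ C).min' hne1) (C1.erase ((C1 ∩ C).min' hne1)) = C1 :=
          Finset.insert_erase hm1.1
        have e2 : insert ((C2 ∩ C).min' hne2) (C2.erase ((C2 ∩ C).min' hne2)) = C2 :=
          Finset.insert_erase hm2.1
        rw [← e1, ← e2, heq.1]
        rw [heq.1] at heq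
        rw [heq.2]
    rw [Finset.card_product, Finset.card_powersetCard, Finset.card_univ,
      Fintype.card_fin, q.2.1] at hinj
    exact hinj
  calc (Gam q).card ≤ (v^t).choose (m-1) * TC.card := h1
    _ ≤ (v^t).choose (m-1) * (t * k.choose (t-1)) := Nat.mul_le_mul_left _ h2
    _ = (t * k.choose (t-1)) * (v^t).choose (m-1) := by ring

lemma coverCount_eq {N : ℕ} (A : Fin N → Fin k → Fin v) (C : Finset (Fin k)) :
    coverCount A C = ((univ : Finset (Fin N)).image (fun i => mask C (A i))).card := by
  classical
  set T := (univ : Finset (Fin N)).image (fun i => mask C (A i)) with hT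
  set ext : (C → Fin v) → (Fin k → Fin v) :=
    (fun x j => if h : j ∈ C then x ⟨j, h⟩ else default) with hext
  have hextmem : ∀ (x : C → Fin v) (i : Fin N), (fun j : C => A i j) = x →
      ext x = mask C (A i) := by
    intro x i hi
    funext j
    by_cases h : j ∈ C
    · simp only [hext, dif_pos h, mask, if_pos h]
      exact (congrFun hi ⟨j, h⟩).symm
    · simp [hext, h, mask]
  set F : {x : C → Fin v // ∃ i : Fin N, (fun j : C => A i j) = x} → {f // f ∈ T} :=
    fun x => ⟨ext x.1, by
      obtain ⟨i, hi⟩ := x.2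
      rw [hT, Finset.mem_image]
      exact ⟨i, Finset.mem_univ i, (hextmem x.1 i hi).symm⟩⟩ with hF
  have hFbij : Function.Bijective F := by
    constructor
    · intro a b hab
      apply Subtype.ext
      funext j
      have h2 := congrFun (congrArg Subtype.val hab) j.1
      simpa [hF, hext, j.2] using h2
    · rintro ⟨f, hf⟩
      rw [hT, Finset.mem_image] at hf
      obtain ⟨i, -, hi⟩ := hf
      refine ⟨⟨fun j => A i j, ⟨i, rfl⟩⟩, ?_⟩
      apply Subtype.ext
      simp only [hF]
      rw [hextmem _ i rfl]
      exact hi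
  unfold coverCount
  rw [Nat.card_congr (Equiv.ofBijective F hFbij), Nat.card_eq_finsetCard]

end App

lemma numeric_bound (D : ℕ) (hD : 2 ≤ D) :
    Real.exp (-1) / D ≤ (1/(D:ℝ)) * (1 - 1/(D:ℝ))^(D-1) := by
  have hDn : D = (D - 1) + 1 := by omega
  set n := D - 1 with hn'
  have hn : 1 ≤ n := by omega
  have hn0 : (0:ℝ) < (n:ℝ) := by exact_mod_cast hn
  have hD' : (D:ℝ) = (n:ℝ) + 1 := by rw [hDn]; push_cast; ring
  have hD0 : (0:ℝ) < (D:ℝ) := by rw [hD']; linarith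
  have h1x : (1 : ℝ) - 1/(D:ℝ) = 1/(1 + 1/(n:ℝ)) := by
    rw [hD']; field_simp; ring
  have pow_le : (1 + 1/(n:ℝ))^n ≤ Real.exp 1 := by
    have h := Real.add_one_le_exp (1/(n:ℝ))
    calc (1 + 1/(n:ℝ))^n ≤ (Real.exp (1/(n:ℝ)))^n := by
          apply pow_le_pow_left₀ (by positivity) (by linarith)
      _ = Real.exp ((n:ℝ) * (1/(n:ℝ))) := by rw [Real.exp_nat_mul]
      _ = Real.exp 1 := by rw [mul_one_div, div_self (ne_of_gt hn0)]
  have key : Real.exp (-1) ≤ (1 - 1/(D:ℝ))^n := by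
    rw [h1x, Real.exp_neg, one_div, inv_pow]
    apply inv_anti₀ (by positivity) pow_le
  calc Real.exp (-1) / (D:ℝ) = (1/(D:ℝ)) * Real.exp (-1) := by ring
    _ ≤ (1/(D:ℝ)) * (1 - 1/(D:ℝ))^n := by
        apply mul_le_mul_of_nonneg_left key (by positivity)

theorem stmt_1 (t k v m N : ℕ) (ht : 2 ≤ t) (hv : 2 ≤ v) (hk : 2 * t ≤ k)
    (hm1 : 2 ≤ m) (hm2 : m ≤ v ^ t)
    (hN : (1 + Real.log ((t : ℝ) * (k.choose (t - 1) : ℝ) * ((v ^ t).choose (m - 1) : ℝ))) /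
        Real.log ((v : ℝ) ^ t / ((m : ℝ) - 1)) ≤ (N : ℝ)) :
    ∃ A : Fin N → Fin k → Fin v,
      ∀ C : Finset (Fin k), C.card = t → m ≤ coverCount A C := by
  classical
  haveI : NeZero v := ⟨by omega⟩
  set D : ℕ := t * k.choose (t - 1) * (v ^ t).choose (m - 1) with hDdef
  have htk : t ≤ k := by omega
  have hc1 : 0 < k.choose (t - 1) := Nat.choose_pos (by omega)
  have h2vt : 2 ≤ v ^ t := le_trans hm1 hm2
  have hmvt : m - 1 < v ^ t := by omega
  have hc2 : 0 < (v ^ t).choose (m - 1) := Nat.choose_pos (by omega)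
  have hD2 : 2 ≤ D := by
    calc 2 ≤ t := ht
      _ = t * 1 * 1 := by ring
      _ ≤ D := Nat.mul_le_mul (Nat.mul_le_mul (le_refl t) hc1) hc2
  have hD0 : (0:ℝ) < (D:ℝ) := by exact_mod_cast (by omega : 0 < D)
  have hv0 : (0:ℝ) < (v:ℝ) := by exact_mod_cast (by omega : 0 < v)
  have hvt0 : (0:ℝ) < ((v^t : ℕ):ℝ) := by exact_mod_cast (by positivity : 0 < v ^ t)
  have hvk0 : (0:ℝ) < ((v^k : ℕ):ℝ) := by exact_mod_cast (by positivity : 0 < v ^ k)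
  have hm10 : (0:ℝ) < ((m - 1 : ℕ):ℝ) := by exact_mod_cast (by omega : 0 < m - 1)
  have hm1R : ((m - 1 : ℕ):ℝ) = (m:ℝ) - 1 := by
    have := Nat.cast_sub (R := ℝ) (by omega : 1 ≤ m)
    simpa using this
  set r : ℝ := ((m - 1 : ℕ):ℝ) / ((v ^ t : ℕ):ℝ) with hrdef
  have hr0 : 0 < r := div_pos hm10 hvt0
  have hvmR : ((m - 1 : ℕ):ℝ) < ((v ^ t : ℕ):ℝ) := by exact_mod_cast hmvt
  have hr1 : r < 1 := (div_lt_one hvt0).mpr hvmR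
  have hDcast : (t : ℝ) * (k.choose (t - 1) : ℝ) * ((v ^ t).choose (m - 1) : ℝ) = (D:ℝ) := by
    rw [hDdef]; push_cast; ring
  have hNeq : (v:ℝ) ^ t / ((m:ℝ) - 1) = ((v ^ t : ℕ):ℝ) / ((m - 1 : ℕ):ℝ) := by
    rw [hm1R]; push_cast; ring
  rw [hDcast, hNeq] at hN
  have hLpos : 0 < Real.log (((v ^ t : ℕ):ℝ) / ((m - 1 : ℕ):ℝ)) :=
    Real.log_pos ((one_lt_div hm10).mpr hvmR)
  have hNlog : 1 + Real.log D ≤ (N:ℝ) * Real.log (((v ^ t : ℕ):ℝ) / ((m - 1 : ℕ):ℝ)) := by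
    rw [div_le_iff₀ hLpos] at hN; linarith
  have hlogr : Real.log r = - Real.log (((v ^ t : ℕ):ℝ) / ((m - 1 : ℕ):ℝ)) := by
    rw [← Real.log_inv]
    congr 1
    rw [hrdef, inv_div]
  have hprBad : ∀ q : PIdx t m k v, pr (BadEv N q) = r ^ N := by
    intro q
    unfold pr
    rw [card_badEv]
    have hcardΩ : Fintype.card (Fin N → Fin k → Fin v) = (v ^ k) ^ N := by
      simp [Fintype.card_fun]
    rw [hcardΩ]
    rw [Nat.cast_pow, Nat.cast_pow, ← div_pow]
    congr 1
    rw [hrdef, div_eq_div_iff (ne_of_gt hvk0) (ne_of_gt hvt0)]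
    have hnat : (m - 1) * v ^ (k - t) * v ^ t = (m - 1) * v ^ k := by
      rw [mul_assoc, ← pow_add, Nat.sub_add_cancel htk]
    exact_mod_cast hnat
  have hrN : r ^ N ≤ Real.exp (-1) / D := by
    have hpow0 : 0 < r ^ N := pow_pos hr0 N
    have hlog2 : Real.log (r ^ N) ≤ -1 - Real.log D := by
      rw [Real.log_pow]
      have : (N:ℝ) * Real.log r
          = -((N:ℝ) * Real.log (((v ^ t : ℕ):ℝ) / ((m - 1 : ℕ):ℝ))) := by
        rw [hlogr]; ring
      rw [this]
      linarith
    calc r ^ N = Real.exp (Real.log (r ^ N)) := (Real.exp_log hpow0).symm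
      _ ≤ Real.exp (-1 - Real.log D) := Real.exp_le_exp.mpr hlog2
      _ = Real.exp (-1) / D := by rw [Real.exp_sub, Real.exp_log hD0]
  have hGamle : ∀ q : PIdx t m k v, (Gam q).card ≤ D := by
    intro q
    have := card_Gam (k := k) (v := v) (by omega) q
    rw [hDdef]
    calc (Gam q).card ≤ t * k.choose (t - 1) * (v ^ t).choose (m - 1) := this
      _ = t * k.choose (t - 1) * (v ^ t).choose (m - 1) := rfl
  have hp : ∀ q : PIdx t m k v,
      pr (BadEv N q) ≤ (1/(D:ℝ)) * (1 - 1/(D:ℝ)) ^ ((Gam q).card - 1) := by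
    intro q
    have hx01 : 0 < 1/(D:ℝ) := by positivity
    have hx11 : 1/(D:ℝ) ≤ 1 := by
      rw [div_le_one hD0]; exact_mod_cast (by omega : 1 ≤ D)
    have h3 : (1 - 1/(D:ℝ)) ^ (D - 1) ≤ (1 - 1/(D:ℝ)) ^ ((Gam q).card - 1) := by
      apply pow_le_pow_of_le_one (by linarith) (by linarith)
      have := hGamle q
      omega
    calc pr (BadEv N q) = r ^ N := hprBad q
      _ ≤ Real.exp (-1) / D := hrN
      _ ≤ (1/(D:ℝ)) * (1 - 1/(D:ℝ)) ^ (D - 1) := numeric_bound D hD2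
      _ ≤ (1/(D:ℝ)) * (1 - 1/(D:ℝ)) ^ ((Gam q).card - 1) :=
          mul_le_mul_of_nonneg_left h3 (le_of_lt hx01)
  have hind : ∀ (q : PIdx t m k v) (J : Finset (PIdx t m k v)), (∀ j ∈ J, j ∉ Gam q) →
      pr (BadEv N q ∩ J.inf fun j => (BadEv N j)ᶜ)
        = pr (BadEv N q) * pr (J.inf fun j => (BadEv N j)ᶜ) := by
    intro q J hJ
    apply pr_of_indep
    apply cyl_card_mul (badEv_cyl N q)
    apply IsCyl.inf
    intro j hj
    have hd : j.1.1 ⊆ (q.1.1)ᶜ := by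
      intro a ha
      rw [Finset.mem_compl]
      intro ha'
      exact hJ j hj (by
        rw [Gam, Finset.mem_filter]
        exact ⟨Finset.mem_univ _, ⟨a, Finset.mem_inter.mpr ⟨ha, ha'⟩⟩⟩)
    exact IsCyl.mono hd (badEv_cyl N j).compl
  obtain ⟨ω, hω⟩ := lll (BadEv N) Gam (fun q => self_mem_Gam (by omega) q) (1/(D:ℝ))
    (by positivity) (by rw [div_lt_one hD0]; exact_mod_cast (by omega : 1 < D)) hp hind
  refine ⟨ω, fun C hC => ?_⟩
  by_contra hlt
  push_neg at hlt
  rw [coverCount_eq] at hlt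
  set T := (univ : Finset (Fin N)).image (fun i => mask C (ω i)) with hT
  have hTsub : T ⊆ maskSet C := by
    intro f hf
    rw [hT, Finset.mem_image] at hf
    obtain ⟨i, -, rfl⟩ := hf
    rw [mem_maskSet]; exact mask_mask C (ω i)
  have hTcard : T.card ≤ m - 1 := by omega
  have hMcard : m - 1 ≤ (maskSet (v := v) C).card := by
    rw [card_maskSet, hC]; omega
  obtain ⟨S, hTS, hSsub, hScard⟩ := Finset.exists_subsuperset_card_eq hTsub hTcard hMcard
  have hmem : ω ∈ BadEv N (⟨(C, S), hC, hScard, hSsub⟩ : PIdx t m k v) := by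
    simp only [BadEv, Finset.mem_filter]
    refine ⟨Finset.mem_univ _, fun i => hTS ?_⟩
    rw [hT]
    exact Finset.mem_image_of_mem _ (Finset.mem_univ i)
  exact hω _ hmem
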